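/- arXiv:1302.4415 — 8 statements merged into one kernel-verified Lean document; each statement's English description precedes it below -/
import Mathlib

section
/- Let A be a V×V matrix over a field and let X ⊆ V be such that A[X] is nonsingular. Then −((A*X)ᵀ) = (−Aᵀ)*X. In particular, if A is skew-symmetric then the principal pivot transform A*X is skew-symmetric. -/
open Matrix
open scoped symmDiff

variable {V : Type} [Fintype V] [DecidableEq V] {F : Type} [Field F]

/-- principal submatrix of `A` indexed by `X` -/
def pSub (A : Matrix V V F) (X : Finset V) : Matrix X X F :=
  Matrix.of fun i j => A i.1 j.1

/-- principal pivot transform of `A` on `X` -/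
noncomputable def ppt (A : Matrix V V F) (X : Finset V) : Matrix V V F :=
  let P : Matrix X X F := Matrix.of fun i j => A i.1 j.1
  let Q : Matrix X {a // a ∉ X} F := Matrix.of fun i j => A i.1 j.1
  let R : Matrix {a // a ∉ X} X F := Matrix.of fun i j => A i.1 j.1
  let S : Matrix {a // a ∉ X} {a // a ∉ X} F := Matrix.of fun i j => A i.1 j.1
  fun i j =>
    if hi : i ∈ X then
      if hj : j ∈ X then P⁻¹ ⟨i, hi⟩ ⟨j, hj⟩
      else (-(P⁻¹ * Q)) ⟨i, hi⟩ ⟨j, hj⟩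
    else
      if hj : j ∈ X then (R * P⁻¹) ⟨i, hi⟩ ⟨j, hj⟩
      else (S - R * P⁻¹ * Q) ⟨i, hi⟩ ⟨j, hj⟩
lemma neg_transpose_inv {n : Type} [Fintype n] [DecidableEq n]
    (M : Matrix n n F) (h : M.det ≠ 0) : (-Mᵀ)⁻¹ = -(M⁻¹)ᵀ := by
  apply Matrix.inv_eq_right_inv
  rw [Matrix.neg_mul, Matrix.mul_neg, neg_neg, ← Matrix.transpose_mul,
    Matrix.nonsing_inv_mul M (Ne.isUnit h), Matrix.transpose_one]

/-- −((A*X)ᵀ) = (−Aᵀ)*X; in particular if A is skew-symmetric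
then so is A*X. -/
theorem ppt_neg_transpose (A : Matrix V V F) (X : Finset V)
    (hX : (pSub A X).det ≠ 0) :
    (-(ppt A X)ᵀ = ppt (-Aᵀ) X) ∧ (-Aᵀ = A → -(ppt A X)ᵀ = ppt A X) := by
  have hPdet : (Matrix.of fun (i j : X) => A i.1 j.1 : Matrix X X F).det ≠ 0 := hX
  set P : Matrix X X F := Matrix.of fun i j => A i.1 j.1 with hPdef
  set Q : Matrix X {a // a ∉ X} F := Matrix.of fun i j => A i.1 j.1 with hQdef
  set R : Matrix {a // a ∉ X} X F := Matrix.of fun i j => A i.1 j.1 with hRdef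
  set S : Matrix {a // a ∉ X} {a // a ∉ X} F := Matrix.of fun i j => A i.1 j.1 with hSdef
  have hP' : (Matrix.of fun (i j : X) => (-Aᵀ) i.1 j.1 : Matrix X X F) = -Pᵀ := rfl
  have hQ' : (Matrix.of fun (i : X) (j : {a // a ∉ X}) => (-Aᵀ) i.1 j.1) = -Rᵀ := rfl
  have hR' : (Matrix.of fun (i : {a // a ∉ X}) (j : X) => (-Aᵀ) i.1 j.1) = -Qᵀ := rfl
  have hS' : (Matrix.of fun (i j : {a // a ∉ X}) => (-Aᵀ) i.1 j.1) = -Sᵀ := rfl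
  have hinv : (-Pᵀ)⁻¹ = -(P⁻¹)ᵀ := neg_transpose_inv P hPdet
  have e2 : -((-Pᵀ)⁻¹ * (-Rᵀ)) = -((R * P⁻¹)ᵀ) := by
    rw [hinv, Matrix.neg_mul, Matrix.mul_neg, neg_neg, ← Matrix.transpose_mul]
  have e3 : (-Qᵀ) * (-Pᵀ)⁻¹ = -(-(P⁻¹ * Q))ᵀ := by
    rw [hinv, Matrix.neg_mul, Matrix.mul_neg, neg_neg, ← Matrix.transpose_mul,
      Matrix.transpose_neg, neg_neg]
  have e4 : (-Sᵀ) - (-Qᵀ) * (-Pᵀ)⁻¹ * (-Rᵀ) = -((S - R * P⁻¹ * Q)ᵀ) := by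
    rw [hinv]
    simp only [Matrix.neg_mul, Matrix.mul_neg, neg_neg, Matrix.transpose_sub,
      Matrix.transpose_mul, Matrix.transpose_neg]
    rw [Matrix.mul_assoc]
    abel
  have main : -(ppt A X)ᵀ = ppt (-Aᵀ) X := by
    funext i j
    show -(ppt A X j i) = ppt (-Aᵀ) X i j
    unfold ppt
    rw [hP', hQ', hR', hS', ← hPdef, ← hQdef, ← hRdef, ← hSdef]
    by_cases hi : i ∈ X <;> by_cases hj : j ∈ X <;>
      simp only [hi, hj, dite_true, dite_false, dif_pos, dif_neg, not_false_iff]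
    · rw [hinv]; simp
    · rw [congrFun (congrFun e2 ⟨i, hi⟩) ⟨j, hj⟩]; simp
      rw [← Matrix.transpose_mul]; rfl
    · rw [congrFun (congrFun e3 ⟨i, hi⟩) ⟨j, hj⟩]; simp
      rw [← Matrix.transpose_mul]; rfl
    · rw [congrFun (congrFun e4 ⟨i, hi⟩) ⟨j, hj⟩]; simp
      rw [← Matrix.transpose_mul, ← Matrix.transpose_mul]; rfl
  exact ⟨main, fun h => by rw [main, h]⟩
end

section
/- Let α be an automorphism of a field F, let A be an α-symmetric V×V matrix over F, and let X ⊆ V be such that A[X] is nonsingular. Then the principal pivot transform A*X is α-symmetric. -/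
open Matrix
open scoped symmDiff

variable {V : Type} [Fintype V] [DecidableEq V] {F : Type} [Field F]

lemma map_inv_helper {n : Type} [Fintype n] [DecidableEq n] (f : F →+* F) (M : Matrix n n F)
    (h : IsUnit M.det) : (M.map f)⁻¹ = M⁻¹.map f := by
  apply inv_eq_right_inv
  rw [← Matrix.map_mul, M.mul_nonsing_inv h, Matrix.map_one _ f.map_zero f.map_one]

lemma neg_inv_helper {n : Type} [Fintype n] [DecidableEq n] (M : Matrix n n F) :
    (-M)⁻¹ = -(M⁻¹) := by
  by_cases h : IsUnit M.det
  · apply inv_eq_right_inv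
    rw [neg_mul_neg, M.mul_nonsing_inv h]
  · rw [Matrix.nonsing_inv_apply_not_isUnit M h, Matrix.nonsing_inv_apply_not_isUnit, neg_zero]
    rw [Matrix.det_neg]
    intro hu
    exact h (isUnit_of_mul_isUnit_right hu)

/-- the principal pivot transform of an α-symmetric matrix is
α-symmetric. -/
theorem ppt_alphaSymm (A : Matrix V V F) (α : F ≃+* F) (X : Finset V)
    (hA : ∀ i j, α (-(Aᵀ i j)) = A i j) (hX : (pSub A X).det ≠ 0) :
    ∀ i j, α (-((ppt A X)ᵀ i j)) = ppt A X i j := by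
  classical
  set f : F →+* F := (α : F →+* F) with hf
  set P : Matrix X X F := Matrix.of fun i j => A i.1 j.1 with hPdef
  set Q : Matrix X {a // a ∉ X} F := Matrix.of fun i j => A i.1 j.1 with hQdef
  set R : Matrix {a // a ∉ X} X F := Matrix.of fun i j => A i.1 j.1 with hRdef
  set S : Matrix {a // a ∉ X} {a // a ∉ X} F := Matrix.of fun i j => A i.1 j.1 with hSdef
  have hmapneg : ∀ {m n : Type} (M : Matrix m n F), (-M).map f = -(M.map f) := by
    intro m n M
    ext i j
    simp [Matrix.map_apply]
  have hP : (-Pᵀ).map f = P := by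
    ext i j
    simpa [hf, RingEquiv.coe_toRingHom, hPdef, Matrix.map_apply] using hA i.1 j.1
  have hQ : (-Rᵀ).map f = Q := by
    ext i j
    simpa [hf, RingEquiv.coe_toRingHom, hQdef, hRdef, Matrix.map_apply] using hA i.1 j.1
  have hR : (-Qᵀ).map f = R := by
    ext i j
    simpa [hf, RingEquiv.coe_toRingHom, hQdef, hRdef, Matrix.map_apply] using hA i.1 j.1
  have hS : (-Sᵀ).map f = S := by
    ext i j
    simpa [hf, RingEquiv.coe_toRingHom, hSdef, Matrix.map_apply] using hA i.1 j.1
  have hPu : IsUnit P.det := isUnit_iff_ne_zero.mpr hX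
  have hPtu : IsUnit (-Pᵀ).det := by
    rw [isUnit_iff_ne_zero, Matrix.det_neg, Matrix.det_transpose]
    exact mul_ne_zero (pow_ne_zero _ (by norm_num)) hX
  have hmapadd : ∀ {m n : Type} (M N : Matrix m n F), (M + N).map f = M.map f + N.map f := by
    intro m n M N
    ext i j
    simp [Matrix.map_apply]
  have key1 : (-(P⁻¹)ᵀ).map f = P⁻¹ := by
    calc (-(P⁻¹)ᵀ).map f = ((-Pᵀ)⁻¹).map f := by rw [neg_inv_helper, Matrix.transpose_nonsing_inv]
    _ = ((-Pᵀ).map f)⁻¹ := (map_inv_helper f _ hPtu).symm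
    _ = P⁻¹ := by rw [hP]
  have hPinvmap : (P⁻¹)ᵀ.map f = -P⁻¹ := by
    have h := key1; rw [hmapneg] at h; exact neg_eq_iff_eq_neg.mp h
  have hRtmap : (Rᵀ).map f = -Q := by
    have h := hQ; rw [hmapneg] at h; exact neg_eq_iff_eq_neg.mp h
  have hQtmap : (Qᵀ).map f = -R := by
    have h := hR; rw [hmapneg] at h; exact neg_eq_iff_eq_neg.mp h
  have key2 : (-(R * P⁻¹)ᵀ).map f = -(P⁻¹ * Q) := by
    calc (-(R * P⁻¹)ᵀ).map f = ((-(P⁻¹)ᵀ) * Rᵀ).map f := by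
          rw [Matrix.transpose_mul, Matrix.neg_mul]
    _ = ((-(P⁻¹)ᵀ).map f) * (Rᵀ.map f) := Matrix.map_mul
    _ = P⁻¹ * (-Q) := by rw [key1, hRtmap]
    _ = -(P⁻¹ * Q) := by rw [Matrix.mul_neg]
  have key3 : (-(-(P⁻¹ * Q))ᵀ).map f = R * P⁻¹ := by
    calc (-(-(P⁻¹ * Q))ᵀ).map f = (Qᵀ * (P⁻¹)ᵀ).map f := by
          rw [Matrix.transpose_neg, neg_neg, Matrix.transpose_mul]
    _ = (Qᵀ.map f) * ((P⁻¹)ᵀ.map f) := Matrix.map_mul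
    _ = (-R) * (-P⁻¹) := by rw [hQtmap, hPinvmap]
    _ = R * P⁻¹ := by rw [Matrix.neg_mul, Matrix.mul_neg, neg_neg]
  have key4 : (-(S - R * P⁻¹ * Q)ᵀ).map f = S - R * P⁻¹ * Q := by
    calc (-(S - R * P⁻¹ * Q)ᵀ).map f = ((-Sᵀ) + Qᵀ * ((P⁻¹)ᵀ * Rᵀ)).map f := by
          rw [Matrix.transpose_sub, neg_sub, Matrix.transpose_mul, Matrix.transpose_mul,
            sub_eq_neg_add]
    _ = ((-Sᵀ).map f) + ((Qᵀ * ((P⁻¹)ᵀ * Rᵀ)).map f) := hmapadd _ _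
    _ = S + (Qᵀ.map f) * (((P⁻¹)ᵀ.map f) * (Rᵀ.map f)) := by
          rw [hS, Matrix.map_mul, Matrix.map_mul]
    _ = S + (-R) * ((-P⁻¹) * (-Q)) := by rw [hQtmap, hPinvmap, hRtmap]
    _ = S - R * P⁻¹ * Q := by
          simp only [Matrix.neg_mul, Matrix.mul_neg, neg_neg, Matrix.mul_assoc]
          rw [sub_eq_add_neg]
  intro i j
  change α (-(ppt A X j i)) = ppt A X i j
  simp only [ppt, Matrix.transpose_apply]
  simp only [← hPdef, ← hQdef, ← hRdef, ← hSdef]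
  by_cases hi : i ∈ X <;> by_cases hj : j ∈ X <;>
    simp only [hi, hj, dite_true, dite_false, not_true, not_false_iff]
  · have h := congrFun (congrFun key1 ⟨i, hi⟩) ⟨j, hj⟩
    simp only [Matrix.map_apply, Matrix.neg_apply, Matrix.transpose_apply,
      RingEquiv.coe_toRingHom] at h
    exact h
  · have h := congrFun (congrFun key2 ⟨i, hi⟩) ⟨j, hj⟩
    simp only [Matrix.map_apply, Matrix.neg_apply, Matrix.transpose_apply,
      RingEquiv.coe_toRingHom] at h
    exact h
  · have h := congrFun (congrFun key3 ⟨i, hi⟩) ⟨j, hj⟩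
    simp only [Matrix.map_apply, Matrix.neg_apply, Matrix.transpose_apply,
      RingEquiv.coe_toRingHom] at h
    exact h
  · have h := congrFun (congrFun key4 ⟨i, hi⟩) ⟨j, hj⟩
    simp only [Matrix.map_apply, Matrix.neg_apply, Matrix.transpose_apply,
      RingEquiv.coe_toRingHom] at h
    exact h
end

section
/- Let A be a V×V matrix over a field and let X ⊆ V be such that A[X] is nonsingular. Then for all Y ⊆ V, det((A*X)[Y]) = det(A[X △ Y]) / det(A[X]), where △ denotes symmetric difference. In particular, (A*X)[Y] is nonsingular if and only if A[X △ Y] is nonsingular. -/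
open scoped symmDiff

variable {V : Type} [Fintype V] [DecidableEq V] {F : Type} [Field F]

/-- mix of rows of `M` (on `Z`) and of the identity (off `Z`) -/
def rowMix (M : Matrix V V F) (Z : Finset V) : Matrix V V F :=
  Matrix.of fun i j => if i ∈ Z then M i j else if i = j then 1 else 0

lemma det_rowMix (M : Matrix V V F) (Z : Finset V) :
    (rowMix M Z).det = (pSub M Z).det := by
  classical
  let e : {a // a ∈ Z} ⊕ {a // a ∉ Z} ≃ V := Equiv.sumCompl (· ∈ Z)
  rw [← Matrix.det_submatrix_equiv_self e]
  have h : (rowMix M Z).submatrix e e =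
      Matrix.fromBlocks (pSub M Z) (Matrix.of fun (i : {a // a ∈ Z}) (j : {a // a ∉ Z}) => M i.1 j.1) 0 1 := by
    ext i j
    cases i with
    | inl i =>
      cases j with
      | inl j => simp [rowMix, pSub, e, i.2]
      | inr j => simp [rowMix, pSub, e, i.2]
    | inr i =>
      cases j with
      | inl j =>
        have : i.1 ≠ j.1 := fun h => i.2 (h ▸ j.2)
        simp [rowMix, e, i.2, this]
      | inr j =>
        simp [rowMix, e, i.2, Matrix.one_apply, Subtype.ext_iff]
  rw [h, Matrix.det_fromBlocks_zero₂₁]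
  simp

lemma ppt_mul_rowMix (A : Matrix V V F) (X : Finset V) (hX : (pSub A X).det ≠ 0) :
    ppt A X * rowMix A X = rowMix A Xᶜ := by
  classical
  set P : Matrix X X F := pSub A X with hPdef
  set Q : Matrix X {a // a ∉ X} F := Matrix.of fun i j => A i.1 j.1 with hQdef
  set R : Matrix {a // a ∉ X} X F := Matrix.of fun i j => A i.1 j.1 with hRdef
  set S : Matrix {a // a ∉ X} {a // a ∉ X} F := Matrix.of fun i j => A i.1 j.1 with hSdef
  have hP : P⁻¹ * P = 1 := Matrix.nonsing_inv_mul _ (isUnit_iff_ne_zero.2 hX)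
  ext i j
  rw [Matrix.mul_apply, ← Finset.sum_add_sum_compl X]
  have hc : ∑ k ∈ Xᶜ, ppt A X i k * rowMix A X k j
      = if j ∈ X then 0 else ppt A X i j := by
    have h1 : ∀ k ∈ Xᶜ, ppt A X i k * rowMix A X k j
        = if k = j then ppt A X i j else 0 := by
      intro k hk
      rw [Finset.mem_compl] at hk
      simp only [rowMix, Matrix.of_apply, if_neg hk]
      split_ifs with h
      · subst h; ring
      · ring
    rw [Finset.sum_congr rfl h1, Finset.sum_ite_eq' Xᶜ j (fun _ => ppt A X i j)]
    by_cases hj : j ∈ X <;> simp [hj]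
  rw [hc]
  have hm : ∑ k ∈ X, ppt A X i k * rowMix A X k j
      = ∑ k : X, ppt A X i k.1 * A k.1 j := by
    rw [← Finset.sum_coe_sort X (fun k => ppt A X i k * rowMix A X k j)]
    refine Finset.sum_congr rfl fun k _ => ?_
    simp [rowMix, k.2]
  rw [hm]
  by_cases hi : i ∈ X <;> by_cases hj : j ∈ X
  · -- i ∈ X, j ∈ X : (P⁻¹ * P) i j = δ
    have h1 : ∑ k : X, ppt A X i k.1 * A k.1 j
        = (P⁻¹ * P) ⟨i, hi⟩ ⟨j, hj⟩ := by
      rw [Matrix.mul_apply]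
      refine Finset.sum_congr rfl fun k _ => ?_
      congr 1
      simp [ppt, hi, k.2, hPdef, pSub]
    rw [h1, hP, if_pos hj]
    simp [rowMix, hi, Matrix.one_apply, Subtype.ext_iff]
  · -- i ∈ X, j ∉ X
    have h1 : ∑ k : X, ppt A X i k.1 * A k.1 j
        = (P⁻¹ * Q) ⟨i, hi⟩ ⟨j, hj⟩ := by
      rw [Matrix.mul_apply]
      refine Finset.sum_congr rfl fun k _ => ?_
      congr 1
      simp [ppt, hi, k.2, hPdef, pSub]
    have h2 : ppt A X i j = (-(P⁻¹ * Q)) ⟨i, hi⟩ ⟨j, hj⟩ := by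
      simp only [ppt, dif_pos hi, dif_neg hj]
      rfl
    have hij : i ≠ j := fun h => hj (h ▸ hi)
    rw [h1, if_neg hj, h2]
    simp [rowMix, hi, hij]
  · -- i ∉ X, j ∈ X
    have h1 : ∑ k : X, ppt A X i k.1 * A k.1 j
        = (R * P⁻¹ * P) ⟨i, hi⟩ ⟨j, hj⟩ := by
      rw [Matrix.mul_apply]
      refine Finset.sum_congr rfl fun k _ => ?_
      congr 1
      simp [ppt, hi, k.2, hPdef, pSub, hRdef]
    rw [h1, Matrix.mul_assoc, hP, Matrix.mul_one, if_pos hj]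
    simp [rowMix, hi, hRdef]
  · -- i ∉ X, j ∉ X
    have h1 : ∑ k : X, ppt A X i k.1 * A k.1 j
        = (R * P⁻¹ * Q) ⟨i, hi⟩ ⟨j, hj⟩ := by
      rw [Matrix.mul_apply]
      refine Finset.sum_congr rfl fun k _ => ?_
      congr 1
      simp [ppt, hi, k.2, hPdef, pSub, hRdef]
    have h2 : ppt A X i j = (S - R * P⁻¹ * Q) ⟨i, hi⟩ ⟨j, hj⟩ := by
      simp only [ppt, dif_neg hi, dif_neg hj]
      rfl
    rw [h1, if_neg hj, h2]
    simp [rowMix, hi, Matrix.sub_apply, hSdef]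

lemma rowMix_mul (A : Matrix V V F) (X Y : Finset V) (hX : (pSub A X).det ≠ 0) :
    rowMix (ppt A X) Y * rowMix A X = rowMix A (X ∆ Y) := by
  classical
  ext i j
  rw [Matrix.mul_apply]
  by_cases hi : i ∈ Y
  · have : ∀ k, rowMix (ppt A X) Y i k = ppt A X i k := fun k => by simp [rowMix, hi]
    simp_rw [this]
    rw [← Matrix.mul_apply, ppt_mul_rowMix A X hX]
    by_cases hx : i ∈ X <;> simp [rowMix, Finset.mem_symmDiff, hi, hx]
  · have : ∀ k, rowMix (ppt A X) Y i k = (1 : Matrix V V F) i k := fun k => by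
      simp [rowMix, hi, Matrix.one_apply]
    simp_rw [this]
    rw [← Matrix.mul_apply, Matrix.one_mul]
    by_cases hx : i ∈ X <;> simp [rowMix, Finset.mem_symmDiff, hi, hx]

/-- Tucker: det((A*X)[Y]) = det(A[X △ Y]) / det(A[X]); in
particular (A*X)[Y] is nonsingular iff A[X △ Y] is nonsingular. -/
theorem ppt_principal_minor (A : Matrix V V F) (X : Finset V)
    (hX : (pSub A X).det ≠ 0) (Y : Finset V) :
    (pSub (ppt A X) Y).det = (pSub A (X ∆ Y)).det / (pSub A X).det ∧
      ((pSub (ppt A X) Y).det ≠ 0 ↔ (pSub A (X ∆ Y)).det ≠ 0) := by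
  have key : (pSub (ppt A X) Y).det * (pSub A X).det = (pSub A (X ∆ Y)).det := by
    rw [← det_rowMix (ppt A X) Y, ← det_rowMix A X, ← Matrix.det_mul,
      rowMix_mul A X Y hX, det_rowMix]
  have h1 : (pSub (ppt A X) Y).det = (pSub A (X ∆ Y)).det / (pSub A X).det := by
    rw [eq_div_iff hX]; exact key
  refine ⟨h1, ?_⟩
  rw [h1, div_ne_zero_iff]
  exact ⟨fun h => h.1, fun h => ⟨h, hX⟩⟩
end

section
/- On a set system M over ground set V and element u ∈ V, the pivot operation M*u and the loop complementation operation M+u are both involutions, and they generate a group of operations isomorphic to the symmetric group S₃; in particular (+u)(*u)(+u) = (*u)(+u)(*u). -/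
open scoped symmDiff

variable {V : Type} [Fintype V] [DecidableEq V]

/-- pivot (twist) of a set system on `X` -/
def pivotOp (E : Finset (Finset V)) (X : Finset V) : Finset (Finset V) :=
  E.image (fun Y => Y ∆ X)

/-- loop complementation of a set system on `u` -/
def loopC (E : Finset (Finset V)) (u : V) : Finset (Finset V) :=
  E ∆ ((E.filter (fun Y => u ∉ Y)).image (fun Y => insert u Y))

/-- the dual pivot ∂u = +u *u +u -/
def dualPivot (E : Finset (Finset V)) (u : V) : Finset (Finset V) :=
  loopC (pivotOp (loopC E u) {u}) u

set_option linter.unusedSectionVars false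

lemma mem_pivotOp {E : Finset (Finset V)} {X Y : Finset V} :
    Y ∈ pivotOp E X ↔ Y ∆ X ∈ E := by
  simp only [pivotOp, Finset.mem_image]
  constructor
  · rintro ⟨Z, hZ, rfl⟩; rwa [symmDiff_symmDiff_cancel_right]
  · intro h; exact ⟨Y ∆ X, h, by rw [symmDiff_symmDiff_cancel_right]⟩

lemma mem_loopC {E : Finset (Finset V)} {u : V} {Y : Finset V} :
    Y ∈ loopC E u ↔ ((Y ∈ E) ↔ ¬(u ∈ Y ∧ Y.erase u ∈ E)) := by
  have : (Y ∈ (E.filter (fun Z => u ∉ Z)).image (fun Z => insert u Z)) ↔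
      (u ∈ Y ∧ Y.erase u ∈ E) := by
    simp only [Finset.mem_image, Finset.mem_filter]
    constructor
    · rintro ⟨Z, ⟨hZ, hu⟩, rfl⟩
      exact ⟨Finset.mem_insert_self _ _, by rwa [Finset.erase_insert hu]⟩
    · rintro ⟨hu, hZ⟩
      exact ⟨Y.erase u, ⟨hZ, Finset.notMem_erase _ _⟩, Finset.insert_erase hu⟩
  rw [loopC, Finset.mem_symmDiff, this]
  tauto

lemma sd_singleton_not_mem {u : V} {Z : Finset V} (h : u ∉ Z) : Z ∆ {u} = insert u Z := by
  ext x
  simp only [Finset.mem_symmDiff, Finset.mem_singleton, Finset.mem_insert]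
  constructor
  · rintro (⟨hx, hne⟩ | ⟨rfl, _⟩) <;> tauto
  · rintro (rfl | hx)
    · exact Or.inr ⟨rfl, h⟩
    · exact Or.inl ⟨hx, fun e => h (e ▸ hx)⟩

lemma sd_singleton_mem {u : V} {Z : Finset V} (h : u ∉ Z) : (insert u Z) ∆ {u} = Z := by
  rw [← sd_singleton_not_mem h, symmDiff_symmDiff_cancel_right]

lemma loopC_invol (E : Finset (Finset V)) (u : V) : loopC (loopC E u) u = E := by
  ext Y
  by_cases hu : u ∈ Y
  · obtain ⟨Z, hZ, rfl⟩ : ∃ Z, u ∉ Z ∧ Y = insert u Z :=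
      ⟨Y.erase u, Finset.notMem_erase _ _, (Finset.insert_erase hu).symm⟩
    simp only [mem_loopC, Finset.erase_insert hZ, Finset.mem_insert_self, hZ, true_and, false_and]
    tauto
  · simp only [mem_loopC, hu, false_and]
    tauto

lemma pivot_invol (E : Finset (Finset V)) (X : Finset V) : pivotOp (pivotOp E X) X = E := by
  ext Y
  rw [mem_pivotOp, mem_pivotOp, symmDiff_symmDiff_cancel_right]

lemma braid (E : Finset (Finset V)) (u : V) :
    loopC (pivotOp (loopC E u) {u}) u = pivotOp (loopC (pivotOp E {u}) u) {u} := by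
  ext Y
  by_cases hu : u ∈ Y
  · obtain ⟨Z, hZ, rfl⟩ : ∃ Z, u ∉ Z ∧ Y = insert u Z :=
      ⟨Y.erase u, Finset.notMem_erase _ _, (Finset.insert_erase hu).symm⟩
    simp only [mem_loopC, mem_pivotOp, Finset.erase_insert hZ, sd_singleton_mem hZ,
      sd_singleton_not_mem hZ, Finset.mem_insert_self, hZ, true_and, false_and]
    tauto
  · have hmem : u ∈ Y ∆ {u} := by
      rw [sd_singleton_not_mem hu]; exact Finset.mem_insert_self _ _
    have herase : (Y ∆ {u}).erase u = Y := by
      rw [sd_singleton_not_mem hu, Finset.erase_insert hu]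
    simp only [mem_loopC, mem_pivotOp, hu, hmem, herase, symmDiff_symmDiff_cancel_right,
      Finset.erase_eq_of_notMem hu, false_and, true_and, not_false_iff, iff_true]
    tauto
/-! ### Group part -/

def pP (u : V) : Equiv.Perm (Finset (Finset V)) :=
  Function.Involutive.toPerm (fun E => pivotOp E {u}) (fun E => pivot_invol E {u})

def lP (u : V) : Equiv.Perm (Finset (Finset V)) :=
  Function.Involutive.toPerm (fun E => loopC E u) (fun E => loopC_invol E u)

@[simp] lemma pP_apply (u : V) (E : Finset (Finset V)) : pP u E = pivotOp E {u} := rfl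
@[simp] lemma lP_apply (u : V) (E : Finset (Finset V)) : lP u E = loopC E u := rfl

lemma pP_sq (u : V) : pP u * pP u = 1 := Equiv.ext fun E => pivot_invol E {u}
lemma lP_sq (u : V) : lP u * lP u = 1 := Equiv.ext fun E => loopC_invol E u

lemma braidP (u : V) : lP u * pP u * lP u = pP u * lP u * pP u :=
  Equiv.ext fun E => braid E u

/-- the orbit of three set systems -/
def Tset (u : V) : Fin 3 → Finset (Finset V) := ![{∅}, {{u}}, {∅, {u}}]

lemma T01 (u : V) : ({∅} : Finset (Finset V)) ≠ {{u}} := by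
  intro h
  have h1 : ({u} : Finset V) ∈ ({∅} : Finset (Finset V)) := h ▸ Finset.mem_singleton_self _
  simp only [Finset.mem_singleton] at h1
  exact Finset.singleton_ne_empty u h1

lemma T02 (u : V) : ({∅} : Finset (Finset V)) ≠ {∅, {u}} := by
  intro h
  have h1 : ({u} : Finset V) ∈ ({∅} : Finset (Finset V)) := by
    rw [h]; simp
  simp only [Finset.mem_singleton] at h1
  exact Finset.singleton_ne_empty u h1

lemma T12 (u : V) : ({{u}} : Finset (Finset V)) ≠ {∅, {u}} := by
  intro h
  have h1 : (∅ : Finset V) ∈ ({{u}} : Finset (Finset V)) := by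
    rw [h]; simp
  simp only [Finset.mem_singleton] at h1
  exact Finset.singleton_ne_empty u h1.symm

lemma Tset_inj (u : V) : Function.Injective (Tset u) := by
  intro i j h
  fin_cases i <;> fin_cases j <;>
    simp_all [Tset, T01 u, T02 u, T12 u, (T01 u).symm, (T02 u).symm, (T12 u).symm]

/-! evaluation of the generators on the orbit -/

lemma pivot_T0 (u : V) : pivotOp ({∅} : Finset (Finset V)) {u} = {{u}} := by
  ext Y
  rw [mem_pivotOp]
  simp only [Finset.mem_singleton]
  rw [← Finset.bot_eq_empty, symmDiff_eq_bot]

lemma sd_eq_iff {a b c : Finset V} : a ∆ c = b ↔ a = b ∆ c :=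
  ⟨fun h => by rw [← h, symmDiff_symmDiff_cancel_right],
   fun h => by rw [h, symmDiff_symmDiff_cancel_right]⟩

lemma pivot_T1 (u : V) : pivotOp ({{u}} : Finset (Finset V)) {u} = {∅} := by
  ext Y
  rw [mem_pivotOp]
  simp only [Finset.mem_singleton]
  rw [sd_eq_iff]
  constructor
  · rintro rfl; rw [symmDiff_self, Finset.bot_eq_empty]
  · rintro rfl; rw [symmDiff_self, Finset.bot_eq_empty]

lemma pivot_T2 (u : V) : pivotOp ({∅, {u}} : Finset (Finset V)) {u} = {∅, {u}} := by
  ext Y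
  rw [mem_pivotOp]
  simp only [Finset.mem_insert, Finset.mem_singleton]
  rw [sd_eq_iff, sd_eq_iff]
  have h1 : (∅ : Finset V) ∆ {u} = {u} := by
    rw [← Finset.bot_eq_empty, bot_symmDiff]
  have h2 : ({u} : Finset V) ∆ {u} = ∅ := by
    rw [symmDiff_self, Finset.bot_eq_empty]
  rw [h1, h2]
  tauto

lemma erase_empty_of_mem {Y : Finset V} {u : V} (hu : u ∈ Y) (h : Y.erase u = ∅) :
    Y = {u} := by
  rw [← Finset.insert_erase hu, h]; rfl

lemma erase_ne_singleton {Y : Finset V} {u : V} : Y.erase u ≠ {u} := by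
  intro h
  have := Finset.notMem_erase u Y
  rw [h] at this
  exact this (Finset.mem_singleton_self u)

lemma loopC_T0 (u : V) : loopC ({∅} : Finset (Finset V)) u = {∅, {u}} := by
  ext Y
  rw [mem_loopC]
  simp only [Finset.mem_singleton, Finset.mem_insert]
  by_cases h0 : Y = ∅
  · subst h0; simp
  · by_cases h1 : Y = {u}
    · subst h1; simp [Finset.singleton_ne_empty, Finset.erase_singleton]
    · have hni : ¬(u ∈ Y ∧ Y.erase u = ∅) := fun h => h1 (erase_empty_of_mem h.1 h.2)
      simp [h0, h1, hni]

lemma loopC_T1 (u : V) : loopC ({{u}} : Finset (Finset V)) u = {{u}} := by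
  ext Y
  rw [mem_loopC]
  simp only [Finset.mem_singleton]
  have hni : ¬(u ∈ Y ∧ Y.erase u = {u}) := fun h => erase_ne_singleton h.2
  simp [hni]

lemma loopC_T2 (u : V) : loopC ({∅, {u}} : Finset (Finset V)) u = {∅} := by
  ext Y
  rw [mem_loopC]
  simp only [Finset.mem_singleton, Finset.mem_insert]
  by_cases h0 : Y = ∅
  · subst h0; simp
  · by_cases h1 : Y = {u}
    · subst h1
      simp [Finset.singleton_ne_empty, Finset.erase_singleton, Finset.mem_singleton_self]
    · have hni : ¬(u ∈ Y ∧ (Y.erase u = ∅ ∨ Y.erase u = {u})) := by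
        rintro ⟨hu, he | he⟩
        · exact h1 (erase_empty_of_mem hu he)
        · exact erase_ne_singleton he
      simp [h0, h1, hni]


section AbstractS3


section Abstract

variable {X : Type}

lemma abs_pmul (p l : Equiv.Perm X) (hp : p * p = 1) (hbr : l * p * l = p * l * p) (g : Equiv.Perm X)
    (hg : g ∈ ({1, p, l, p*l, l*p, p*l*p} : Set (Equiv.Perm X))) :
    p * g ∈ ({1, p, l, p*l, l*p, p*l*p} : Set (Equiv.Perm X)) := by
  simp only [Set.mem_insert_iff, Set.mem_singleton_iff] at hg ⊢
  rcases hg with rfl | rfl | rfl | rfl | rfl | rfl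
  · right; left; rw [mul_one]
  · left; exact hp
  · right; right; right; left; rfl
  · right; right; left; rw [← mul_assoc, hp, one_mul]
  · right; right; right; right; right; rw [← mul_assoc]
  · right; right; right; right; left
    rw [← mul_assoc, ← mul_assoc, hp, one_mul]

lemma abs_lmul (p l : Equiv.Perm X) (hp : p * p = 1) (hl : l * l = 1) (hbr : l * p * l = p * l * p)
    (g : Equiv.Perm X)
    (hg : g ∈ ({1, p, l, p*l, l*p, p*l*p} : Set (Equiv.Perm X))) :
    l * g ∈ ({1, p, l, p*l, l*p, p*l*p} : Set (Equiv.Perm X)) := by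
  simp only [Set.mem_insert_iff, Set.mem_singleton_iff] at hg ⊢
  rcases hg with rfl | rfl | rfl | rfl | rfl | rfl
  · right; right; left; rw [mul_one]
  · right; right; right; right; left; rfl
  · left; exact hl
  · right; right; right; right; right
    rw [← mul_assoc]; exact hbr
  · right; left; rw [← mul_assoc, hl, one_mul]
  · right; right; right; left
    have h2 : l * (p * l * p) = (l * p * l) * p := by group
    have h3 : p * l * p * p = p * l * (p * p) := by group
    rw [h2, hbr, h3, hp, mul_one]

/-- the six-element subgroup -/
def Wsub (p l : Equiv.Perm X) (hp : p * p = 1) (hl : l * l = 1) (hbr : l * p * l = p * l * p) :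
    Subgroup (Equiv.Perm X) where
  carrier := {1, p, l, p*l, l*p, p*l*p}
  one_mem' := Or.inl rfl
  mul_mem' := by
    intro a b ha hb
    simp only [Set.mem_insert_iff, Set.mem_singleton_iff] at ha
    rcases ha with rfl | rfl | rfl | rfl | rfl | rfl
    · rwa [one_mul]
    · exact abs_pmul _ _ hp hbr b hb
    · exact abs_lmul _ _ hp hl hbr b hb
    · rw [mul_assoc]; exact abs_pmul _ _ hp hbr _ (abs_lmul _ _ hp hl hbr b hb)
    · rw [mul_assoc]; exact abs_lmul _ _ hp hl hbr _ (abs_pmul _ _ hp hbr b hb)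
    · rw [mul_assoc, mul_assoc]
      exact abs_pmul _ _ hp hbr _ (abs_lmul _ _ hp hl hbr _ (abs_pmul _ _ hp hbr b hb))
  inv_mem' := by
    intro a ha
    simp only [Set.mem_insert_iff, Set.mem_singleton_iff] at ha ⊢
    rcases ha with rfl | rfl | rfl | rfl | rfl | rfl
    · left; exact inv_one
    · right; left; exact inv_eq_of_mul_eq_one_right hp
    · right; right; left; exact inv_eq_of_mul_eq_one_right hl
    · right; right; right; right; left
      refine inv_eq_of_mul_eq_one_right ?_
      have h2 : p * l * (l * p) = p * (l * l) * p := by group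
      rw [h2, hl, mul_one, hp]
    · right; right; right; left
      refine inv_eq_of_mul_eq_one_right ?_
      have h2 : l * p * (p * l) = l * (p * p) * l := by group
      rw [h2, hp, mul_one, hl]
    · right; right; right; right; right
      refine inv_eq_of_mul_eq_one_right ?_
      have h2 : p * l * p * (p * l * p) = p * (l * (p * p) * l) * p := by group
      have h3 : p * (l * l) * p = p * p := by rw [hl, mul_one]
      rw [h2, hp, mul_one, h3, hp]

lemma closure_eq_W (p l : Equiv.Perm X) (hp : p * p = 1) (hl : l * l = 1) (hbr : l * p * l = p * l * p) :
    Subgroup.closure {p, l} = Wsub p l hp hl hbr := by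
  apply le_antisymm
  · rw [Subgroup.closure_le]
    intro x hx
    show x ∈ ({1, p, l, p*l, l*p, p*l*p} : Set (Equiv.Perm X))
    rcases hx with rfl | hx
    · right; left; rfl
    · rw [Set.mem_singleton_iff] at hx; subst hx; right; right; left; rfl
  · intro g hg
    replace hg : g ∈ ({1, p, l, p*l, l*p, p*l*p} : Set (Equiv.Perm X)) := hg
    have hpc : p ∈ Subgroup.closure {p, l} := Subgroup.subset_closure (Or.inl rfl)
    have hlc : l ∈ Subgroup.closure {p, l} := Subgroup.subset_closure (Or.inr rfl)
    rcases hg with rfl | rfl | rfl | rfl | rfl | rfl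
    · exact one_mem _
    · exact hpc
    · exact hlc
    · exact mul_mem hpc hlc
    · exact mul_mem hlc hpc
    · exact mul_mem (mul_mem hpc hlc) hpc

/-- abstract S3 isomorphism -/
theorem abstract_S3 (p l : Equiv.Perm X) (T : Fin 3 → X) (hT : Function.Injective T)
    (hp : p * p = 1) (hl : l * l = 1) (hbr : l * p * l = p * l * p)
    (hp0 : p (T 0) = T 1) (hp1 : p (T 1) = T 0) (hp2 : p (T 2) = T 2)
    (hl0 : l (T 0) = T 2) (hl1 : l (T 1) = T 1) (hl2 : l (T 2) = T 0) :
    Nonempty ((Subgroup.closure {p, l} : Subgroup (Equiv.Perm X)) ≃* Equiv.Perm (Fin 3)) := by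
  classical
  -- every element of the closure permutes the T's
  have hstrong : ∀ g ∈ Subgroup.closure {p, l},
      ∃ σ : Equiv.Perm (Fin 3), ∀ i, g (T i) = T (σ i) := by
    intro g hg
    induction hg using Subgroup.closure_induction with
    | mem x hx =>
      rcases hx with rfl | hx
      · refine ⟨Equiv.swap 0 1, fun i => ?_⟩
        fin_cases i
        · simpa using hp0
        · simpa using hp1
        · have : (Equiv.swap (0 : Fin 3) 1) 2 = 2 := by decide
          simpa [this] using hp2
      · rw [Set.mem_singleton_iff] at hx; subst hx
        refine ⟨Equiv.swap 0 2, fun i => ?_⟩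
        fin_cases i
        · simpa using hl0
        · have : (Equiv.swap (0 : Fin 3) 2) 1 = 1 := by decide
          simpa [this] using hl1
        · simpa using hl2
    | one => exact ⟨1, fun i => rfl⟩
    | mul x y hx hy ihx ihy =>
      obtain ⟨σ, hσ⟩ := ihx
      obtain ⟨τ, hτ⟩ := ihy
      exact ⟨σ * τ, fun i => by
        simp only [Equiv.Perm.mul_apply, hτ i, hσ (τ i)]⟩
    | inv x hx ihx =>
      obtain ⟨σ, hσ⟩ := ihx
      refine ⟨σ⁻¹, fun i => ?_⟩
      have h1 := hσ (σ⁻¹ i)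
      rw [show σ (σ⁻¹ i) = i from Equiv.apply_symm_apply σ i] at h1
      rw [← h1, show x⁻¹ (x (T (σ⁻¹ i))) = T (σ⁻¹ i) from Equiv.symm_apply_apply x _]
  -- uniqueness of the permutation
  have huniq : ∀ (g : Equiv.Perm X) (σ τ : Equiv.Perm (Fin 3)),
      (∀ i, g (T i) = T (σ i)) → (∀ i, g (T i) = T (τ i)) → σ = τ := by
    intro g σ τ hσ hτ
    apply Equiv.ext
    intro i
    exact hT ((hσ i).symm.trans (hτ i))
  -- the homomorphism to Perm (Fin 3)
  set C := Subgroup.closure ({p, l} : Set (Equiv.Perm X)) with hC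
  let sig : C → Equiv.Perm (Fin 3) := fun g => Classical.choose (hstrong g.1 g.2)
  have hsig : ∀ g : C, ∀ i, g.1 (T i) = T (sig g i) :=
    fun g => Classical.choose_spec (hstrong g.1 g.2)
  let φ : C →* Equiv.Perm (Fin 3) := MonoidHom.mk' sig (by
    intro a b
    refine huniq (a.1 * b.1) _ _ (hsig (a * b)) fun i => ?_
    have h1 := hsig b i
    have h2 := hsig a (sig b i)
    simp only [Equiv.Perm.mul_apply]
    rw [h1, h2])
  have hmemp : p ∈ C := Subgroup.subset_closure (Or.inl rfl)
  have hmeml : l ∈ C := Subgroup.subset_closure (Or.inr rfl)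
  -- compute φ on generators
  have hφp : φ ⟨p, hmemp⟩ = Equiv.swap 0 1 := by
    refine huniq p _ _ (hsig ⟨p, hmemp⟩) fun i => ?_
    fin_cases i
    · simpa using hp0
    · simpa using hp1
    · have : (Equiv.swap (0 : Fin 3) 1) 2 = 2 := by decide
      simpa [this] using hp2
  have hφl : φ ⟨l, hmeml⟩ = Equiv.swap 0 2 := by
    refine huniq l _ _ (hsig ⟨l, hmeml⟩) fun i => ?_
    fin_cases i
    · simpa using hl0
    · have : (Equiv.swap (0 : Fin 3) 2) 1 = 1 := by decide
      simpa [this] using hl1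
    · simpa using hl2
  -- injectivity
  have hinj : Function.Injective φ := by
    rw [injective_iff_map_eq_one]
    rintro ⟨g, hg⟩ h1
    have hfix : ∀ i, g (T i) = T i := by
      intro i
      have := hsig ⟨g, hg⟩ i
      rw [show sig ⟨g, hg⟩ = φ ⟨g, hg⟩ from rfl, h1] at this
      simpa using this
    have hgW : g ∈ ({1, p, l, p*l, l*p, p*l*p} : Set (Equiv.Perm X)) := by
      have h2 : g ∈ Wsub p l hp hl hbr := by
        rw [← closure_eq_W p l hp hl hbr]; exact hg
      exact h2
    apply Subtype.ext
    rcases hgW with rfl | rfl | rfl | rfl | rfl | rfl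
    · rfl
    · exact absurd (hT ((hp0).symm.trans (hfix 0))) (by decide)
    · exact absurd (hT ((hl0).symm.trans (hfix 0))) (by decide)
    · -- g = p * l ; (p*l) (T 1) = p (T 1) = T 0
      have : (p * l) (T 1) = T 0 := by
        simp only [Equiv.Perm.mul_apply, hl1, hp1]
      exact absurd (hT (this.symm.trans (hfix 1))) (by decide)
    · have : (l * p) (T 0) = T 1 := by
        simp only [Equiv.Perm.mul_apply, hp0]
        rw [hl1]
      exact absurd (hT (this.symm.trans (hfix 0))) (by decide)
    · have : (p * l * p) (T 2) = T 1 := by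
        simp only [Equiv.Perm.mul_apply, hp2, hl2, hp0]
      exact absurd (hT (this.symm.trans (hfix 2))) (by decide)
  -- surjectivity
  have hsurj : Function.Surjective φ := by
    intro σ
    have h6 : σ = 1 ∨ σ = Equiv.swap 0 1 ∨ σ = Equiv.swap 0 2 ∨
        σ = Equiv.swap 0 1 * Equiv.swap 0 2 ∨ σ = Equiv.swap 0 2 * Equiv.swap 0 1 ∨
        σ = Equiv.swap 0 1 * Equiv.swap 0 2 * Equiv.swap 0 1 := by
      revert σ; decide
    rcases h6 with rfl | rfl | rfl | rfl | rfl | rfl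
    · exact ⟨1, map_one φ⟩
    · exact ⟨⟨p, hmemp⟩, hφp⟩
    · exact ⟨⟨l, hmeml⟩, hφl⟩
    · exact ⟨⟨p, hmemp⟩ * ⟨l, hmeml⟩, by rw [map_mul, hφp, hφl]⟩
    · exact ⟨⟨l, hmeml⟩ * ⟨p, hmemp⟩, by rw [map_mul, hφp, hφl]⟩
    · exact ⟨⟨p, hmemp⟩ * ⟨l, hmeml⟩ * ⟨p, hmemp⟩, by
        rw [map_mul, map_mul, hφp, hφl]⟩
  exact ⟨MulEquiv.ofBijective φ ⟨hinj, hsurj⟩⟩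

end Abstract

end AbstractS3

/-- pivot *u and loop complementation +u are involutions
generating a group isomorphic to S₃; in particular +u*u+u = *u+u*u. -/
theorem pivot_loopC_generate_S3 (u : V) :
    ∃ p l : Equiv.Perm (Finset (Finset V)),
      (∀ E, p E = pivotOp E {u}) ∧ (∀ E, l E = loopC E u) ∧
      p * p = 1 ∧ l * l = 1 ∧
      (∀ E : Finset (Finset V),
        loopC (pivotOp (loopC E u) {u}) u = pivotOp (loopC (pivotOp E {u}) u) {u}) ∧
      Nonempty ((Subgroup.closure {p, l} : Subgroup (Equiv.Perm (Finset (Finset V))))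
        ≃* Equiv.Perm (Fin 3)) := by
  refine ⟨pP u, lP u, fun E => rfl, fun E => rfl, pP_sq u, lP_sq u, fun E => braid E u, ?_⟩
  exact abstract_S3 (pP u) (lP u) (Tset u) (Tset_inj u) (pP_sq u) (lP_sq u) (braidP u)
    (by simp [Tset, pivot_T0]) (by simp [Tset, pivot_T1]) (by simp [Tset, pivot_T2])
    (by simp [Tset, loopC_T0]) (by simp [Tset, loopC_T1]) (by simp [Tset, loopC_T2])
end

section
/- Let M = (V,E) be a set system. Then X ∈ M+V if and only if the number of sets Z ∈ E with Z ⊆ X is odd. -/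
open scoped symmDiff

variable {V : Type} [Fintype V] [DecidableEq V]

section Aux

variable {α : Type*} [DecidableEq α]

lemma filter_symmDiff' (A B : Finset α) (p : α → Prop) [DecidablePred p] :
    (A ∆ B).filter p = A.filter p ∆ B.filter p := by
  ext x; simp [Finset.mem_symmDiff, Finset.mem_filter]; tauto

lemma odd_card_symmDiff (A B : Finset α) :
    Odd (A ∆ B).card ↔ (Odd A.card ↔ ¬ Odd B.card) := by
  have hdisj : Disjoint (A \ B) (B \ A) := disjoint_sdiff_sdiff
  have h1 : (A ∆ B).card = (A \ B).card + (B \ A).card := by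
    rw [symmDiff_def]; exact Finset.card_union_of_disjoint hdisj
  have h2 : (A ∩ B).card + (A \ B).card = A.card := Finset.card_inter_add_card_sdiff A B
  have h3 : (B ∩ A).card + (B \ A).card = B.card := Finset.card_inter_add_card_sdiff B A
  have h4 : (A ∩ B).card = (B ∩ A).card := by rw [Finset.inter_comm]
  simp only [Nat.odd_iff] at *
  omega

end Aux

lemma key_loopC (X : Finset V) :
    ∀ (l : List V) (E : Finset (Finset V)), l.Nodup →
      (X ∈ l.foldl loopC E ↔
        Odd (E.filter (fun Z => Z ⊆ X ∧ X \ Z ⊆ l.toFinset)).card) := by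
  intro l
  induction l with
  | nil =>
    intro E _
    simp only [List.foldl_nil, List.toFinset_nil]
    have hset : E.filter (fun Z => Z ⊆ X ∧ X \ Z ⊆ (∅ : Finset V))
        = E.filter (fun Z => Z = X) := by
      apply Finset.filter_congr
      intro Z _
      simp only [Finset.subset_empty, Finset.sdiff_eq_empty_iff_subset, eq_iff_iff]
      constructor
      · rintro ⟨h1, h2⟩; exact Finset.Subset.antisymm h1 h2
      · rintro rfl; exact ⟨Finset.Subset.rfl, Finset.Subset.rfl⟩
    erw [hset, Finset.filter_eq']
    by_cases hX : X ∈ E <;> simp [hX]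
  | cons u t ih =>
    intro E hnd
    have hut : u ∉ t := (List.nodup_cons.mp hnd).1
    have hndt : t.Nodup := (List.nodup_cons.mp hnd).2
    set S : Finset V := t.toFinset with hS
    have hu : u ∉ S := by simp [hS, hut]
    rw [List.foldl_cons, ih (loopC E u) hndt]
    simp only [List.toFinset_cons]
    rw [← hS]
    set P : Finset V → Prop := fun Z => Z ⊆ X ∧ X \ Z ⊆ S with hP
    set Q : Finset V → Prop := fun Z => Z ⊆ X ∧ X \ Z ⊆ insert u S with hQ
    set D : Finset (Finset V) := (E.filter (fun Y => u ∉ Y)).image (fun Y => insert u Y) with hD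
    have hinj : Set.InjOn (fun Y => insert u Y) (E.filter (fun Y => u ∉ Y) : Set (Finset V)) := by
      intro Y1 h1 Y2 h2 h
      simp only [Finset.coe_filter, Set.mem_setOf_eq] at h1 h2
      have e1 : (insert u Y1).erase u = Y1 := Finset.erase_insert h1.2
      have e2 : (insert u Y2).erase u = Y2 := Finset.erase_insert h2.2
      rw [← e1, ← e2, show insert u Y1 = insert u Y2 from h]
    have hDfilter : D.filter P = ((E.filter (fun Y => u ∉ Y)).filter
        (fun Y => P (insert u Y))).image (fun Y => insert u Y) := by
      rw [hD, Finset.filter_image]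
    have hDcard : (D.filter P).card =
        ((E.filter (fun Y => u ∉ Y)).filter (fun Y => P (insert u Y))).card := by
      rw [hDfilter]
      exact Finset.card_image_of_injOn (hinj.mono (by
        intro x hx
        simp only [Finset.coe_filter, Set.mem_setOf_eq, Finset.mem_filter] at hx ⊢
        exact hx.1))
    have hsplit : Odd ((loopC E u).filter P).card ↔
        (Odd (E.filter P).card ↔ ¬ Odd ((E.filter (fun Y => u ∉ Y)).filter
          (fun Y => P (insert u Y))).card) := by
      rw [loopC, ← hD, filter_symmDiff', odd_card_symmDiff, hDcard]
    rw [hsplit]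
    by_cases hux : u ∈ X
    · -- u ∈ X
      have hBeq : (E.filter (fun Y => u ∉ Y)).filter (fun Y => P (insert u Y))
          = E.filter (fun Z => u ∉ Z ∧ Q Z) := by
        rw [Finset.filter_filter]
        apply Finset.filter_congr
        intro Z _
        simp only [hP, hQ, eq_iff_iff]
        constructor
        · rintro ⟨hz, hsub, hsd⟩
          refine ⟨hz, fun x hx => (Finset.insert_subset_iff.mp hsub).2 hx, fun x hx => ?_⟩
          rcases Finset.mem_sdiff.mp hx with ⟨hxX, hxZ⟩
          by_cases hxu : x = u
          · exact Finset.mem_insert.mpr (Or.inl hxu)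
          · exact Finset.mem_insert.mpr (Or.inr (hsd (by
              simp [Finset.mem_sdiff, Finset.mem_insert, hxX, hxZ, hxu])))
        · rintro ⟨hz, hsub, hsd⟩
          refine ⟨hz, Finset.insert_subset hux hsub, fun x hx => ?_⟩
          rcases Finset.mem_sdiff.mp hx with ⟨hxX, hxZ⟩
          have hxu : x ≠ u := fun h => hxZ (by rw [h]; exact Finset.mem_insert_self u Z)
          have hxZ' : x ∉ Z := fun h => hxZ (Finset.mem_insert_of_mem h)
          rcases Finset.mem_insert.mp (hsd (Finset.mem_sdiff.mpr ⟨hxX, hxZ'⟩)) with h | h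
          · exact absurd h hxu
          · exact h
      have hAeq : E.filter P = E.filter (fun Z => u ∈ Z ∧ Q Z) := by
        apply Finset.filter_congr
        intro Z _
        simp only [hP, hQ, eq_iff_iff]
        constructor
        · rintro ⟨hsub, hsd⟩
          have huZ : u ∈ Z := by
            by_contra huZ
            exact hu (hsd (Finset.mem_sdiff.mpr ⟨hux, huZ⟩))
          exact ⟨huZ, hsub, hsd.trans (Finset.subset_insert u S)⟩
        · rintro ⟨huZ, hsub, hsd⟩
          refine ⟨hsub, fun x hx => ?_⟩
          rcases Finset.mem_sdiff.mp hx with ⟨hxX, hxZ⟩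
          have hxu : x ≠ u := fun h => hxZ (h ▸ huZ)
          rcases Finset.mem_insert.mp (hsd hx) with h | h
          · exact absurd h hxu
          · exact h
      have hQsplit : (E.filter Q).card =
          (E.filter (fun Z => u ∈ Z ∧ Q Z)).card + (E.filter (fun Z => u ∉ Z ∧ Q Z)).card := by
        have hdisjQ : Disjoint (E.filter (fun Z => u ∈ Z ∧ Q Z))
            (E.filter (fun Z => u ∉ Z ∧ Q Z)) := by
          rw [Finset.disjoint_left]
          intro Z h1 h2
          exact (Finset.mem_filter.mp h2).2.1 (Finset.mem_filter.mp h1).2.1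
        rw [← Finset.card_union_of_disjoint hdisjQ]
        congr 1
        ext Z
        simp only [Finset.mem_union, Finset.mem_filter]
        by_cases huZ : u ∈ Z <;> tauto
      rw [hBeq, hAeq]
      have hgoal : (E.filter (fun Z => Z ⊆ X ∧ X \ Z ⊆ insert u S)) = E.filter Q := rfl
      rw [hgoal]
      simp only [Nat.odd_iff] at *
      omega
    · -- u ∉ X
      have hB0 : (E.filter (fun Y => u ∉ Y)).filter (fun Y => P (insert u Y)) = ∅ := by
        apply Finset.filter_false_of_mem
        intro Z _
        simp only [hP]
        rintro ⟨hsub, -⟩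
        exact hux (hsub (Finset.mem_insert_self u Z))
      have hQP : E.filter Q = E.filter P := by
        apply Finset.filter_congr
        intro Z _
        simp only [hP, hQ, eq_iff_iff]
        constructor
        · rintro ⟨hsub, hsd⟩
          refine ⟨hsub, fun x hx => ?_⟩
          have hxu : x ≠ u := fun h => hux (h ▸ (Finset.mem_sdiff.mp hx).1)
          rcases Finset.mem_insert.mp (hsd hx) with h | h
          · exact absurd h hxu
          · exact h
        · rintro ⟨hsub, hsd⟩
          exact ⟨hsub, hsd.trans (Finset.subset_insert u S)⟩
      rw [hB0, hQP]
      simp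

/-- X ∈ M+V iff the number of Z ∈ E with Z ⊆ X is odd.
M+V is obtained by applying +u for every u ∈ V, in any order. -/
theorem mem_loopC_univ_iff (E : Finset (Finset V)) (X : Finset V)
    (l : List V) (hnd : l.Nodup) (huniv : l.toFinset = Finset.univ) :
    X ∈ l.foldl loopC E ↔ Odd (E.filter (fun Z => Z ⊆ X)).card := by
  rw [key_loopC X l E hnd, huniv]
  congr! 2
  ext Z
  simp
end

section
/- Let α be an automorphism of a field F and let A be an α-symmetric V×V matrix over F. Then the set system M_A = (V, {X ⊆ V : A[X] is nonsingular}) is a delta-matroid, i.e., it is nonempty and satisfies the symmetric exchange axiom. -/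
open Matrix
open scoped symmDiff

variable {V : Type} [Fintype V] [DecidableEq V] {F : Type} [Field F]

open scoped Classical in
/-- the set system of index sets of nonsingular principal submatrices of A -/
noncomputable def MA (A : Matrix V V F) : Finset (Finset V) :=
  Finset.univ.filter (fun X => (pSub A X).det ≠ 0)

/-- a delta-matroid: a nonempty set system satisfying symmetric exchange -/
def IsDeltaMatroid (E : Finset (Finset V)) : Prop :=
  E.Nonempty ∧ ∀ X ∈ E, ∀ Y ∈ E, ∀ u ∈ X ∆ Y,
    X ∆ ({u} : Finset V) ∈ E ∨ ∃ v ∈ X ∆ Y, v ≠ u ∧ X ∆ ({u, v} : Finset V) ∈ E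
/-- mixed matrix: column j is column j of A if j ∈ X, else identity column -/
def NN (A : Matrix V V F) (X : Finset V) : Matrix V V F :=
  Matrix.of fun i j => if j ∈ X then A i j else if i = j then 1 else 0

lemma det_NN (A : Matrix V V F) (X : Finset V) : (NN A X).det = (pSub A X).det := by
  have h : (NN A X).submatrix (Equiv.sumCompl (· ∈ X)) (Equiv.sumCompl (· ∈ X)) =
      Matrix.fromBlocks (pSub A X) 0 (Matrix.of fun (i : {a // ¬ a ∈ X}) (j : {a // a ∈ X}) => A i.1 j.1) 1 := by
    ext i j
    rcases i with i | i <;> rcases j with j | j <;>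
      simp [NN, pSub, Matrix.fromBlocks, Matrix.one_apply, Subtype.ext_iff, j.2] <;>
      first
      | rfl
      | (intro h; exact absurd (h ▸ i.2) j.2)
  calc (NN A X).det
      = ((NN A X).submatrix (Equiv.sumCompl (· ∈ X)) (Equiv.sumCompl (· ∈ X))).det :=
        (Matrix.det_submatrix_equiv_self _ _).symm
    _ = (pSub A X).det := by rw [h, Matrix.det_fromBlocks_zero₁₂, Matrix.det_one, mul_one]

lemma mem_MA_iff {A : Matrix V V F} {X : Finset V} : X ∈ MA A ↔ (NN A X).det ≠ 0 := by
  classical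
  simp [MA, Finset.mem_filter, det_NN]

lemma core (A : Matrix V V F) (α : F ≃+* F) (hA : ∀ i j, α (-(Aᵀ i j)) = A i j) (X : Finset V) :
    NN A X * ((NN A Xᶜ)ᵀ.map ⇑α) + NN A Xᶜ * ((NN A X)ᵀ.map ⇑α) = 0 := by
  have hα : ∀ a b : V, α (A a b) = -A b a := by
    intro a b
    have h := hA b a
    rw [Matrix.transpose_apply, map_neg] at h
    rw [← h, neg_neg]
  ext i k
  simp only [Matrix.add_apply, Matrix.mul_apply, Matrix.zero_apply, Matrix.map_apply,
    Matrix.transpose_apply, NN, Matrix.of_apply]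
  rw [← Finset.sum_add_distrib]
  have hterm : ∀ j ∈ Finset.univ, ((if j ∈ X then A i j else if i = j then 1 else 0) *
        α (if j ∈ Xᶜ then A k j else if k = j then 1 else 0) +
      (if j ∈ Xᶜ then A i j else if i = j then 1 else 0) *
        α (if j ∈ X then A k j else if k = j then 1 else 0))
      = (if j = k then A i j else 0) - (if j = i then A j k else 0) := by
    intro j _
    clear hA
    by_cases hjX : j ∈ X <;>
      simp only [hjX, Finset.mem_compl, not_true, not_false_iff, if_true, if_false,
        if_neg, if_pos, apply_ite ⇑α, _root_.map_one, _root_.map_zero, hα] <;>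
      (clear hα; split_ifs <;> subst_vars <;> first | ring1 | simp_all)
  rw [Finset.sum_congr rfl hterm, Finset.sum_sub_distrib]
  simp [Finset.sum_ite_eq', Finset.sum_ite_eq]

lemma NN_col_eq (A : Matrix V V F) {X Y : Finset V} {j : V} (h : j ∈ X ↔ j ∈ Y) (r : V) :
    NN A X r j = NN A Y r j := by
  simp only [NN, Matrix.of_apply]
  rw [if_congr h rfl rfl]

lemma transfer (A : Matrix V V F) (α : F ≃+* F) (hA : ∀ i j, α (-(Aᵀ i j)) = A i j)
    (X : Finset V) (hX : (NN A X).det ≠ 0) (u v : V)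
    (h : ((NN A X).adjugate * NN A Xᶜ) u v ≠ 0) :
    ((NN A X).adjugate * NN A Xᶜ) v u ≠ 0 := by
  set NX := NN A X with hNXdef
  set NX' := NN A Xᶜ with hNX'def
  have hu : IsUnit NX.det := isUnit_iff_ne_zero.mpr hX
  have hRXdet : ((NX)ᵀ.map ⇑α).det ≠ 0 := by
    have h1 := RingHom.map_det (α : F →+* F) (NX)ᵀ
    simp only [RingHom.mapMatrix_apply, RingEquiv.coe_toRingHom, Matrix.det_transpose] at h1
    rw [← h1]
    intro h0
    exact hX (α.injective (h0.trans (map_zero α).symm))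
  have hRXu : IsUnit ((NX)ᵀ.map ⇑α).det := isUnit_iff_ne_zero.mpr hRXdet
  have hcore := core A α hA X
  -- hcore : NX * (NX'ᵀ.map α) + NX' * (NXᵀ.map α) = 0
  have hminus : (NX')ᵀ.map ⇑α = NX⁻¹ * -(NX' * ((NX)ᵀ.map ⇑α)) := by
    have h2 : NX * ((NX')ᵀ.map ⇑α) = -(NX' * ((NX)ᵀ.map ⇑α)) :=
      eq_neg_of_add_eq_zero_left hcore
    rw [← h2, ← Matrix.mul_assoc, Matrix.nonsing_inv_mul _ hu, Matrix.one_mul]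
  have hmapinv : ((NX)ᵀ)⁻¹.map ⇑α = ((NX)ᵀ.map ⇑α)⁻¹ := by
    apply (Matrix.inv_eq_left_inv ?_).symm
    have h3 : (((NX)ᵀ)⁻¹ * (NX)ᵀ).map (α : F →+* F) = ((NX)ᵀ)⁻¹.map ⇑α * ((NX)ᵀ.map ⇑α) := by
      rw [Matrix.map_mul]
      simp [RingEquiv.coe_toRingHom]
    rw [← h3, Matrix.nonsing_inv_mul _ (by rwa [Matrix.det_transpose, isUnit_iff_ne_zero])]
    simp [RingEquiv.coe_toRingHom, Matrix.map_one]
  have hadj : NX.adjugate = NX.det • NX⁻¹ := by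
    rw [Matrix.inv_def, Ring.inverse_eq_inv', smul_smul, mul_inv_cancel₀ hX, one_smul]
  have hG : ((NX⁻¹ * NX')ᵀ).map ⇑α = -(NX⁻¹ * NX') := by
    calc ((NX⁻¹ * NX')ᵀ).map ⇑α
        = ((NX')ᵀ * ((NX)ᵀ)⁻¹).map ⇑α := by
          rw [Matrix.transpose_mul, Matrix.transpose_nonsing_inv]
      _ = ((NX')ᵀ.map ⇑α) * (((NX)ᵀ)⁻¹.map ⇑α) := by
          have h4 : (((NX')ᵀ) * ((NX)ᵀ)⁻¹).map (α : F →+* F)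
              = ((NX')ᵀ.map ⇑α) * (((NX)ᵀ)⁻¹.map ⇑α) := by
            rw [Matrix.map_mul]; simp [RingEquiv.coe_toRingHom]
          rw [← h4]; simp [RingEquiv.coe_toRingHom]
      _ = -(NX⁻¹ * NX') := by
          rw [hminus, hmapinv, Matrix.mul_assoc, Matrix.neg_mul, Matrix.mul_neg,
            Matrix.mul_assoc, Matrix.mul_nonsing_inv _ hRXu, Matrix.mul_one]
  have hentry : ∀ a b, (NX.adjugate * NX') a b = NX.det * (NX⁻¹ * NX') a b := by
    intro a b
    rw [hadj, Matrix.smul_mul, Matrix.smul_apply, smul_eq_mul]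
  have hGuv : (NX⁻¹ * NX') u v ≠ 0 := by
    intro h0
    apply h
    rw [hentry, h0, mul_zero]
  have hGvu : (NX⁻¹ * NX') v u ≠ 0 := by
    intro h0
    have h5 := congrFun (congrFun hG u) v
    simp only [Matrix.map_apply, Matrix.transpose_apply, Matrix.neg_apply, h0, map_zero] at h5
    exact hGuv (by rw [← neg_eq_zero, ← h5])
  rw [hentry]
  exact mul_ne_zero hX hGvu

set_option maxHeartbeats 1600000 in
/-- if A is α-symmetric then M_A is a delta-matroid. -/
theorem MA_isDeltaMatroid (A : Matrix V V F) (α : F ≃+* F)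
    (hA : ∀ i j, α (-(Aᵀ i j)) = A i j) :
    IsDeltaMatroid (MA A) := by
  classical
  constructor
  · refine ⟨∅, ?_⟩
    haveI : IsEmpty { x // x ∈ (∅ : Finset V) } := ⟨fun x => (Finset.notMem_empty x.1 x.2)⟩
    simp only [MA, Finset.mem_filter, Finset.mem_univ, true_and]
    rw [Matrix.det_isEmpty]
    exact one_ne_zero
  · intro X hX Y hY u hu
    have hX' : (NN A X).det ≠ 0 := mem_MA_iff.1 hX
    have hY' : (NN A Y).det ≠ 0 := mem_MA_iff.1 hY
    have upd : ∀ (M N : Matrix V V F) (i w : V),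
        (M.updateCol i (fun r => N r w)).det = (M.adjugate * N) i w := by
      intro M N i w
      rw [← Matrix.cramer_apply, Matrix.cramer_eq_adjugate_mulVec]
      simp [Matrix.mulVec, Matrix.mul_apply, dotProduct]
    obtain ⟨v, hv⟩ : ∃ v, ((NN A X).adjugate * NN A Y) u v ≠ 0 := by
      by_contra hcon
      push_neg at hcon
      have h0 : ((NN A X).adjugate * NN A Y).det = 0 :=
        Matrix.det_eq_zero_of_row_eq_zero u hcon
      rw [Matrix.det_mul, Matrix.det_adjugate] at h0
      exact (mul_ne_zero (pow_ne_zero _ hX') hY') h0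
    have huXY : (u ∈ Y) ↔ ¬ u ∈ X := by
      rcases Finset.mem_symmDiff.1 hu with ⟨h1, h2⟩ | ⟨h1, h2⟩ <;> tauto
    have hP : ((NN A X).updateCol u (fun r => NN A Y r v)).det ≠ 0 := by
      rw [upd]; exact hv
    by_cases hvu : v = u
    · -- first disjunct
      subst hvu
      left
      rw [mem_MA_iff]
      have heq : (NN A X).updateCol v (fun r => NN A Y r v) = NN A (X ∆ {v}) := by
        ext i j
        rw [Matrix.updateCol_apply]
        by_cases hj : j = v
        · subst hj
          rw [if_pos rfl]
          refine NN_col_eq A ?_ i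
          simp only [Finset.mem_symmDiff, Finset.mem_singleton]
          tauto
        · rw [if_neg hj]
          refine NN_col_eq A ?_ i
          simp only [Finset.mem_symmDiff, Finset.mem_singleton]
          tauto
      rwa [heq] at hP
    · -- v ≠ u
      have hvXY : v ∈ X ∆ Y := by
        by_contra hvn
        apply hP
        apply Matrix.det_zero_of_column_eq hvu
        intro r
        rw [Matrix.updateCol_apply, Matrix.updateCol_apply, if_pos rfl, if_neg hvu]
        refine (NN_col_eq A ?_ r).symm
        simp only [Finset.mem_symmDiff] at hvn
        tauto
      have hvY : (v ∈ Y) ↔ ¬ v ∈ X := by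
        rcases Finset.mem_symmDiff.1 hvXY with ⟨h1, h2⟩ | ⟨h1, h2⟩ <;> tauto
      have hcoleq : (fun r => NN A Y r v) = (fun r => NN A Xᶜ r v) := by
        funext r
        refine NN_col_eq A ?_ r
        simp only [Finset.mem_compl]
        exact hvY
      have hP'det : ((NN A X).updateCol u (fun r => NN A Xᶜ r v)).det ≠ 0 := by
        rw [← hcoleq]
        exact hP
      have hP2 : ((NN A X).adjugate * NN A Xᶜ) u v ≠ 0 := by
        rw [← upd]
        exact hP'det
      have hQ2 := transfer A α hA X hX' u v hP2
      have hQdet : ((NN A X).updateCol v (fun r => NN A Xᶜ r u)).det ≠ 0 := by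
        rw [upd]; exact hQ2
      have hsplit : ((((NN A X).updateCol v (fun r => NN A Xᶜ r u)).updateCol u
              (fun r => NN A X r v)).det ≠ 0)
          ∨ ((((NN A X).updateCol v (fun r => NN A Xᶜ r u)).updateCol u
              (fun r => NN A Xᶜ r v)).det ≠ 0) := by
        by_contra hcon
        push_neg at hcon
        obtain ⟨h1, h2⟩ := hcon
        have hrow : ∀ j, (((NN A X).updateCol v (fun r => NN A Xᶜ r u)).adjugate *
            ((NN A X).updateCol u (fun r => NN A Xᶜ r v))) u j = 0 := by
          intro j
          rw [← upd]
          by_cases hju : j = u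
          · subst hju
            have hc : (fun r => ((NN A X).updateCol j (fun r => NN A Xᶜ r v)) r j)
                = fun r => NN A Xᶜ r v := by
              funext r
              rw [Matrix.updateCol_apply, if_pos rfl]
            rw [hc]; exact h2
          · by_cases hjv : j = v
            · have hc : (fun r => ((NN A X).updateCol u (fun r => NN A Xᶜ r v)) r j)
                  = fun r => NN A X r v := by
                funext r
                rw [Matrix.updateCol_apply, if_neg hju, hjv]
              rw [hc]; exact h1
            · apply Matrix.det_zero_of_column_eq (show u ≠ j from fun hh => hju hh.symm)
              intro r
              rw [Matrix.updateCol_apply, Matrix.updateCol_apply, if_pos rfl,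
                if_neg hju, Matrix.updateCol_apply, if_neg hju,
                Matrix.updateCol_apply, if_neg hjv]
        have h0 : ((((NN A X).updateCol v (fun r => NN A Xᶜ r u)).adjugate *
            ((NN A X).updateCol u (fun r => NN A Xᶜ r v)))).det = 0 :=
          Matrix.det_eq_zero_of_row_eq_zero u hrow
        rw [Matrix.det_mul, Matrix.det_adjugate] at h0
        exact (mul_ne_zero (pow_ne_zero _ hQdet) hP'det) h0
      have hswap : ∀ (Z : Finset V), (u ∈ Z ↔ ¬ u ∈ X) → (∀ j, j ≠ u → j ≠ v → (j ∈ Z ↔ j ∈ X)) →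
          ∀ (w : V → F), (∀ r, w r = NN A Z r v) →
          ((NN A X).updateCol v (fun r => NN A Xᶜ r u)).updateCol u w
            = (NN A Z).submatrix id ⇑(Equiv.swap u v) := by
        intro Z hZu hZj w hw
        ext i j
        rw [Matrix.updateCol_apply, Matrix.submatrix_apply, id_eq]
        by_cases hj : j = u
        · subst hj
          rw [if_pos rfl, Equiv.swap_apply_left]
          exact hw i
        · rw [if_neg hj, Matrix.updateCol_apply]
          by_cases hjv : j = v
          · subst hjv
            rw [if_pos rfl, Equiv.swap_apply_right]
            refine NN_col_eq A ?_ i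
            simp only [Finset.mem_compl]
            exact hZu.symm
          · rw [if_neg hjv, Equiv.swap_apply_of_ne_of_ne hj hjv]
            exact (NN_col_eq A (hZj j hj hjv).symm i)
      have hdetne : ∀ (Z : Finset V) (M : Matrix V V F), M = (NN A Z).submatrix id ⇑(Equiv.swap u v) →
          M.det ≠ 0 → Z ∈ MA A := by
        intro Z M hM hMdet
        rw [mem_MA_iff]
        rw [hM, Matrix.det_permute'] at hMdet
        intro h0
        exact hMdet (by rw [h0, mul_zero])
      rcases hsplit with h | h
      · left
        refine hdetne _ _ (hswap (X ∆ {u}) ?_ ?_ (fun r => NN A X r v) (fun r => NN_col_eq A ?_ r)) h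
        · simp [Finset.mem_symmDiff]
        · intro j hju hjv
          simp [Finset.mem_symmDiff, hju]
        · simp [Finset.mem_symmDiff, hvu]
      · right
        refine ⟨v, hvXY, hvu, hdetne _ _ (hswap (X ∆ {u, v}) ?_ ?_
          (fun r => NN A Xᶜ r v) (fun r => NN_col_eq A ?_ r)) h⟩
        · simp [Finset.mem_symmDiff]
        · intro j hju hjv
          simp [Finset.mem_symmDiff, hju, hjv]
        · simp [Finset.mem_symmDiff, Finset.mem_compl, hvu]
end

section
/- Let A be a V×V matrix over GF(4) that is inv-symmetric, where inv is the unique nontrivial automorphism of GF(4) (the Frobenius x ↦ x²). Then A is principally unimodular: for every Y ⊆ V, det(A[Y]) ∈ {0, 1}. -/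
open Matrix
open scoped symmDiff

variable {V : Type} [Fintype V] [DecidableEq V] {F : Type} [Field F]

/-- an inv-symmetric matrix over GF(4) is principally
unimodular: every principal minor lies in {0,1} (= {0,1,−1} since −1 = 1). -/
theorem invSymm_principally_unimodular
    (A : Matrix V V (GaloisField 2 2))
    (hA : ∀ i j, (-(Aᵀ i j)) ^ 2 = A i j) :
    ∀ Y : Finset V, (pSub A Y).det ∈ ({0, 1} : Set (GaloisField 2 2)) := by
  intro Y
  set B := pSub A Y with hBdef
  have hB : ∀ i j, (B j i) ^ 2 = B i j := by
    intro i j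
    have := hA i.1 j.1
    simpa [pSub, hBdef, Matrix.transpose_apply, neg_sq] using this
  have h1 : B = (Bᵀ).map (frobenius (GaloisField 2 2) 2) := by
    ext i j
    simp [Matrix.map_apply, Matrix.transpose_apply, frobenius_def, hB]
  have hd : (B.det) ^ 2 = B.det := by
    have h2 := RingHom.map_det (frobenius (GaloisField 2 2) 2) Bᵀ
    rw [Matrix.det_transpose, frobenius_def] at h2
    rw [h2, RingHom.mapMatrix_apply, ← h1]
  have h0 : B.det * (B.det - 1) = 0 := by ring_nf; linear_combination hd
  simp only [Set.mem_insert_iff, Set.mem_singleton_iff]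
  rcases mul_eq_zero.mp h0 with h | h
  · exact Or.inl h
  · exact Or.inr (by linear_combination h)
end

section
/- Let F be a field of characteristic 2, let A be a principally unimodular V×V matrix over F, and let j ∈ V. Then for every Z ⊆ V with j ∈ Z, det((A + I_{j})[Z]) = det(A[Z]) + det(A[Z \ {j}]), where A + I_{j} is A with 1 added to the (j,j) entry; consequently M_{A+I_j} = M_A + j, i.e., for all Z ⊆ V, (A+I_j)[Z] is nonsingular iff Z is in the loop complementation at j of the set system M_A. -/
open Matrix
open scoped symmDiff

variable {V : Type} [Fintype V] [DecidableEq V] {F : Type} [Field F]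

/-- A is principally unimodular: all principal minors lie in {0,1,−1} -/
def PU (A : Matrix V V F) : Prop :=
  ∀ Y : Finset V, (pSub A Y).det ∈ ({0, 1, -1} : Set F)
set_option linter.unusedSectionVars false in
lemma det_single_row {W : Type} [Fintype W] [DecidableEq W] (M : Matrix W W F) (i : W)
    (h : ∀ k, M i k = if k = i then 1 else 0) :
    M.det = (M.toSquareBlockProp (fun x => ¬ x = i)).det := by
  rw [Matrix.twoBlockTriangular_det' M (fun x => x = i)
    (fun x hx y hy => by rw [hx, h]; simp [hy])]
  have h1 : ∀ (de : DecidableEq {x : W // x = i}) (ft : Fintype {x : W // x = i}),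
      @det _ de ft F _ (M.toSquareBlockProp fun x => x = i) = 1 := by
    intro de ft
    haveI : Subsingleton {x : W // x = i} := ⟨fun a b => Subtype.ext (a.2.trans b.2.symm)⟩
    rw [Matrix.det_eq_elem_of_subsingleton _ ⟨i, rfl⟩]
    simpa [Matrix.toSquareBlockProp] using h i
  rw [h1 _ _, one_mul]

set_option linter.unusedSectionVars false in
lemma key (A : Matrix V V F) (j : V) (Z : Finset V) (hj : j ∈ Z) :
    (pSub (A + Matrix.single j j 1) Z).det =
      (pSub A Z).det + (pSub A (Z.erase j)).det := by
  set jz : Z := ⟨j, hj⟩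
  have hP : pSub (A + Matrix.single j j 1) Z =
      Matrix.updateRow (pSub A Z) jz ((pSub A Z) jz + Pi.single jz 1) := by
    ext x y
    by_cases hx : x = jz
    · subst hx
      simp [jz, pSub, Matrix.single_apply, Pi.single_apply, Subtype.ext_iff, eq_comm]
    · have hx' : x.1 ≠ j := fun h => hx (Subtype.ext h)
      simp [pSub, Matrix.updateRow_ne hx, Matrix.single, hx']
      exact fun h => absurd h.symm hx'
  rw [hP, Matrix.det_updateRow_add, Matrix.updateRow_eq_self]
  congr 1
  set N := Matrix.updateRow (pSub A Z) jz (Pi.single jz 1) with hN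
  rw [det_single_row N jz (fun k => by simp [hN, Pi.single_apply])]
  let e : {x : Z // ¬ x = jz} ≃ (Z.erase j : Finset V) :=
    { toFun := fun x => ⟨x.1.1, Finset.mem_erase.2
        ⟨fun h => x.2 (Subtype.ext h), x.1.2⟩⟩
      invFun := fun y => ⟨⟨y.1, (Finset.mem_erase.1 y.2).2⟩,
        fun h => (Finset.mem_erase.1 y.2).1 (congrArg Subtype.val h)⟩
      left_inv := fun x => rfl
      right_inv := fun y => rfl }
  have hM : N.toSquareBlockProp (fun x => ¬ x = jz) =
      (pSub A (Z.erase j)).submatrix e e := by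
    ext x y
    have hx : (x.1 : Z) ≠ jz := x.2
    show N x.1 y.1 = _
    simp [Matrix.toSquareBlockProp, hN, Matrix.updateRow_ne hx, pSub, e]
  rw [hM, Matrix.det_submatrix_equiv_self]

theorem pu_loopC_single [CharP F 2] (A : Matrix V V F) (hPU : PU A) (j : V) :
    (∀ Z : Finset V, j ∈ Z →
      (pSub (A + Matrix.single j j 1) Z).det =
        (pSub A Z).det + (pSub A (Z.erase j)).det) ∧
    MA (A + Matrix.single j j 1) = loopC (MA A) j := by
  haveI : CharP F 2 := inferInstance
  constructor
  · exact fun Z hZ => key A j Z hZ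
  · ext Z
    have hmem : ∀ (B : Matrix V V F) (X : Finset V), X ∈ MA B ↔ (pSub B X).det ≠ 0 := by
      intro B X; simp [MA]
    have hS : Z ∈ (MA A |>.filter (fun Y => j ∉ Y)).image (fun Y => insert j Y) ↔
        (j ∈ Z ∧ Z.erase j ∈ MA A) := by
      constructor
      · rintro h
        rcases Finset.mem_image.1 h with ⟨Y, hY, rfl⟩
        rcases Finset.mem_filter.1 hY with ⟨hYE, hjY⟩
        exact ⟨Finset.mem_insert_self _ _, by rw [Finset.erase_insert hjY]; exact hYE⟩
      · rintro ⟨hjZ, hE⟩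
        exact Finset.mem_image.2 ⟨Z.erase j, Finset.mem_filter.2 ⟨hE, Finset.notMem_erase _ _⟩,
          Finset.insert_erase hjZ⟩
    rw [loopC, Finset.mem_symmDiff, hmem]
    simp only [hmem]
    by_cases hjZ : j ∈ Z
    · rw [key A j Z hjZ]
      have ha := hPU Z
      have hb := hPU (Z.erase j)
      have hneg : (-1 : F) = 1 := by
        rw [neg_eq_iff_add_eq_zero]; exact CharTwo.add_self_eq_zero 1
      rw [hneg] at ha hb
      have h2 : (1 : F) + 1 = 0 := CharTwo.add_self_eq_zero 1
      have h10 : (1 : F) ≠ 0 := one_ne_zero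
      simp only [Set.mem_insert_iff, Set.mem_singleton_iff, or_self] at ha hb
      simp only [hmem, hS, hjZ, true_and]
      rcases ha with ha | ha <;> rcases hb with hb | hb <;> rw [ha, hb] <;> simp [h2, h10]
    · have hsame : pSub (A + Matrix.single j j 1) Z = pSub A Z := by
        ext x y
        have : x.1 ≠ j := fun h => hjZ (h ▸ x.2)
        simp [pSub, Matrix.single, this]
        exact fun h => absurd h.symm this
      rw [hsame]
      have : ¬ Z ∈ (MA A |>.filter (fun Y => j ∉ Y)).image (fun Y => insert j Y) :=
        fun h => hjZ (hS.1 h).1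
      simp [this, hmem]
end
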